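/- (Girard's formula as a hypergeometric identity.) Let ρ_1(x),…,ρ_d(x) be the roots of the generic polynomial f(x;t) = x_0 + x_{k_1}t^{k_1} + ⋯ + x_{k_m}t^{k_m} + x_d t^d on a simply connected open set U ⊂ ℂ^{m+2} avoiding the discriminant locus and {x_0 x_d = 0}. Then for every integer s > 0, the power sum p_s(x) = ρ_1^s(x) + ⋯ + ρ_d^s(x) equals s·Σ_{r=1}^{s} (−1)^r (r−1)! Φ^B((r, rd − s); x')/x_d^r, where B is the 2×(m+1) matrix with columns (1,0),(1,k_1),…,(1,k_m), x' = (x_0,x_{k_1},…,x_{k_m}), and Φ^B is the associated hypergeometric polynomial. -/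

import Mathlib

open Finset

noncomputable section

/-- The hypergeometric polynomial `Φ^B(β;x') = ∑_{u ∈ ℕ^{m+1}, B·u = β} x'^u/u!`
as a function of `x' = (x_0, x_{k_1}, …, x_{k_m})`, where `B` is the
`2×(m+1)` matrix with columns `(1,0),(1,k_1),…,(1,k_m)` (the first `m+1`
columns `(1, k_j)`, `j = 0,…,m`, of the monomial curve matrix).  Any `u` with
`B·u = β` has all entries at most `β_1`, so the sum below is complete. -/
def PhiB (m : ℕ) (k : Fin (m + 2) → ℕ) (β : ℤ × ℤ)
    (x : Fin (m + 1) → ℂ) : ℂ :=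
  if 0 ≤ β.1 then
    ∑ u : Fin (m + 1) → Fin (β.1.toNat + 1),
      if (∑ j, ((u j : ℕ) : ℤ)) = β.1 ∧
         (∑ j, (k j.castSucc : ℤ) * ((u j : ℕ) : ℤ)) = β.2 then
        (∏ j, x j ^ (u j : ℕ)) / (∏ j, ((u j : ℕ).factorial : ℂ))
      else 0
  else 0

open Polynomial in
/-- The polynomial `h' * (1 + (-h) + (-h)^2 + ⋯ + (-h)^(n-1))`, a truncation of
the logarithmic derivative `h'/(1+h)`. -/
def Gpoly (n : ℕ) (h : ℂ[X]) : ℂ[X] :=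
  Polynomial.derivative h * ∑ r ∈ Finset.range n, (-h) ^ r

open Polynomial

lemma coeff_pow_mul_lt {p q : ℂ[X]} (hp : p.coeff 0 = 0) {n j : ℕ} (hj : j < n) :
    (p ^ n * q).coeff j = 0 := by
  have h1 : (X : ℂ[X]) ^ n ∣ p ^ n * q :=
    dvd_mul_of_dvd_left (pow_dvd_pow_of_dvd (X_dvd_iff.mpr hp) n) q
  exact X_pow_dvd_iff.mp h1 j hj

lemma one_add_mul_Gpoly (n : ℕ) (h : ℂ[X]) :
    (1 + h) * Gpoly n h = Polynomial.derivative h * (1 - (-h) ^ n) := by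
  have hg := geom_sum_mul (-h) n
  unfold Gpoly
  linear_combination (-(Polynomial.derivative h)) * hg

lemma coeff_eq_zero_of_one_mul {u v : ℂ[X]} (hu : u.coeff 0 = 1)
    {J : ℕ} (h : ∀ j ≤ J, (u * v).coeff j = 0) : ∀ j ≤ J, v.coeff j = 0 := by
  intro j
  induction j using Nat.strong_induction_on with
  | _ j ih =>
    intro hj
    have h2 := h j hj
    rw [Polynomial.coeff_mul, Finset.Nat.sum_antidiagonal_eq_sum_range_succ
      (fun i l => u.coeff i * v.coeff l)] at h2
    rw [Finset.sum_range_succ'] at h2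
    simp only [Nat.sub_zero, hu, one_mul] at h2
    have hz : ∀ i ∈ Finset.range j, u.coeff (i+1) * v.coeff (j - (i+1)) = 0 := by
      intro i hi
      have hi' := Finset.mem_range.mp hi
      rw [ih (j - (i+1)) (by omega) (by omega), mul_zero]
    rw [Finset.sum_congr rfl hz] at h2
    simpa using h2

lemma Gpoly_coeff_add {a b : ℂ[X]} (ha : a.coeff 0 = 0) (hb : b.coeff 0 = 0)
    {n j : ℕ} (hj : j < n) :
    (Gpoly n (a + b + a * b)).coeff j = (Gpoly n a).coeff j + (Gpoly n b).coeff j := by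
  set c : ℂ[X] := a + b + a * b with hc
  have hc0 : c.coeff 0 = 0 := by
    simp [hc, Polynomial.coeff_add, Polynomial.mul_coeff_zero, ha, hb]
  set w : ℂ[X] := Gpoly n c - Gpoly n a - Gpoly n b with hw
  have k1 := one_add_mul_Gpoly n a
  have k2 := one_add_mul_Gpoly n b
  have k3 := one_add_mul_Gpoly n c
  have hc' : Polynomial.derivative c = Polynomial.derivative a + Polynomial.derivative b
      + (Polynomial.derivative a * b + a * Polynomial.derivative b) := by
    simp [hc, derivative_add, derivative_mul]
  rw [hc'] at k3
  have key : ((1 + a) * (1 + b)) * w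
      = (-a) ^ n * ((1 + b) * Polynomial.derivative a)
        + (-b) ^ n * ((1 + a) * Polynomial.derivative b)
        - (-c) ^ n * (Polynomial.derivative a + Polynomial.derivative b
            + (Polynomial.derivative a * b + a * Polynomial.derivative b)) := by
    have hcc : (1 : ℂ[X]) + c = (1 + a) * (1 + b) := by rw [hc]; ring
    rw [hw]
    linear_combination k3 - (1 + b) * k1 - (1 + a) * k2
      + (Gpoly n c) * hcc
  have hu : ((1 + a) * (1 + b)).coeff 0 = 1 := by
    simp [Polynomial.mul_coeff_zero, ha, hb]
  have hzero : ∀ i ≤ j, w.coeff i = 0 := by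
    apply coeff_eq_zero_of_one_mul hu
    intro i hi
    rw [key]
    have hia : ((-a) ^ n * ((1 + b) * Polynomial.derivative a)).coeff i = 0 :=
      coeff_pow_mul_lt (by simp [ha]) (lt_of_le_of_lt hi hj)
    have hib : ((-b) ^ n * ((1 + a) * Polynomial.derivative b)).coeff i = 0 :=
      coeff_pow_mul_lt (by simp [hb]) (lt_of_le_of_lt hi hj)
    have hic : ((-c) ^ n * (Polynomial.derivative a + Polynomial.derivative b
        + (Polynomial.derivative a * b + a * Polynomial.derivative b))).coeff i = 0 :=
      coeff_pow_mul_lt (by simp [hc0]) (lt_of_le_of_lt hi hj)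
    rw [Polynomial.coeff_sub, Polynomial.coeff_add, hia, hib, hic]
    ring
  have := hzero j le_rfl
  rw [hw] at this
  simp only [Polynomial.coeff_sub] at this
  linear_combination this

lemma Gpoly_single (ρ : ℂ) (s : ℕ) (hs : 1 ≤ s) :
    (Gpoly s (-(C ρ * X))).coeff (s - 1) = -ρ ^ s := by
  unfold Gpoly
  rw [derivative_neg, derivative_C_mul, derivative_X, mul_one, neg_neg]
  rw [Finset.mul_sum, Polynomial.finset_sum_coeff]
  have : ∀ r ∈ Finset.range s, (-C ρ * (C ρ * X) ^ r).coeff (s - 1)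
      = if r = s - 1 then -ρ ^ s else 0 := by
    intro r _
    rw [show -C ρ * (C ρ * X) ^ r = C (-(ρ * ρ ^ r)) * X ^ r by
      rw [mul_pow, ← C_pow, map_neg, map_mul]; ring]
    rw [Polynomial.coeff_C_mul, Polynomial.coeff_X_pow]
    by_cases h : s - 1 = r
    · simp only [h, if_pos rfl, mul_one, if_pos h.symm]
      rw [← pow_succ', show r + 1 = s by omega]
      simp
    · simp [h, Ne.symm h]
  rw [Finset.sum_congr rfl this, Finset.sum_ite_eq' (Finset.range s) (s-1)]
  rw [if_pos (Finset.mem_range.mpr (by omega))]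

lemma Gpoly_prod {ι : Type*} (t : Finset ι) (ρ : ι → ℂ) (s : ℕ) (hs : 1 ≤ s) :
    (Gpoly s ((∏ i ∈ t, (1 - C (ρ i) * X)) - 1)).coeff (s - 1) = -∑ i ∈ t, ρ i ^ s := by
  induction t using Finset.cons_induction with
  | empty => simp [Gpoly]
  | cons i t hit ih =>
    have hb0 : ((∏ j ∈ t, (1 - C (ρ j) * X)) - 1).coeff 0 = 0 := by
      rw [Polynomial.coeff_sub, Polynomial.coeff_zero_eq_eval_zero]
      simp [Polynomial.eval_prod]
    have ha0 : (-(C (ρ i) * X) : ℂ[X]).coeff 0 = 0 := by simp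
    have hsplit : (∏ j ∈ Finset.cons i t hit, (1 - C (ρ j) * X)) - 1
        = (-(C (ρ i) * X)) + ((∏ j ∈ t, (1 - C (ρ j) * X)) - 1)
          + (-(C (ρ i) * X)) * ((∏ j ∈ t, (1 - C (ρ j) * X)) - 1) := by
      rw [Finset.prod_cons]; ring
    rw [hsplit, Gpoly_coeff_add ha0 hb0 (by omega : s - 1 < s), Gpoly_single (ρ i) s hs, ih,
      Finset.sum_cons]
    ring

lemma Gpoly_coeff_eq (h : ℂ[X]) {s : ℕ} (hs : 1 ≤ s) :
    (Gpoly s h).coeff (s - 1)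
      = ∑ r ∈ Finset.Icc 1 s, (-1 : ℂ) ^ (r - 1) * ((s : ℂ) / r) * ((h ^ r).coeff s) := by
  have key : ∀ r : ℕ, (Polynomial.derivative h * (-h) ^ r).coeff (s - 1)
      = (-1 : ℂ) ^ r * ((s : ℂ) / ((r : ℂ) + 1)) * ((h ^ (r + 1)).coeff s) := by
    intro r
    have hd : Polynomial.derivative (h ^ (r + 1))
        = C ((r : ℂ) + 1) * (h ^ r * Polynomial.derivative h) := by
      rw [Polynomial.derivative_pow]
      push_cast
      ring
    have hcd : (Polynomial.derivative (h ^ (r + 1))).coeff (s - 1)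
        = (h ^ (r + 1)).coeff s * (s : ℂ) := by
      rw [Polynomial.coeff_derivative, show s - 1 + 1 = s from by omega]
      congr 1
      push_cast [Nat.cast_sub hs]
      ring
    rw [hd, Polynomial.coeff_C_mul] at hcd
    have hr1 : ((r : ℂ) + 1) ≠ 0 := by
      exact Nat.cast_add_one_ne_zero r
    have hmain : (h ^ r * Polynomial.derivative h).coeff (s - 1)
        = (s : ℂ) / ((r : ℂ) + 1) * ((h ^ (r + 1)).coeff s) := by
      field_simp
      linear_combination hcd
    calc (Polynomial.derivative h * (-h) ^ r).coeff (s - 1)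
        = (C ((-1 : ℂ) ^ r) * (h ^ r * Polynomial.derivative h)).coeff (s - 1) := by
          congr 1
          rw [neg_pow]
          rw [show ((-1 : ℂ[X]) ^ r) = C ((-1:ℂ) ^ r) by rw [map_pow, map_neg, map_one]]
          ring
      _ = (-1 : ℂ) ^ r * ((s : ℂ) / ((r : ℂ) + 1) * ((h ^ (r + 1)).coeff s)) := by
          rw [Polynomial.coeff_C_mul, hmain]
      _ = _ := by ring
  unfold Gpoly
  rw [Finset.mul_sum, Polynomial.finset_sum_coeff, Finset.sum_congr rfl fun r _ => key r]
  rw [show Finset.Icc 1 s = Finset.Ico 1 (s+1) from by rw [Finset.Ico_add_one_right_eq_Icc],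
    Finset.sum_Ico_eq_sum_range]
  simp only [Nat.add_sub_cancel]
  apply Finset.sum_congr rfl
  intro i _
  rw [show 1 + i - 1 = i from by omega]
  push_cast
  ring

lemma coeff_pow_eq_phiB (m : ℕ) (k : Fin (m + 2) → ℕ) (hmono : StrictMono k)
    (x : Fin (m + 2) → ℂ) (hxd : x (Fin.last (m + 1)) ≠ 0) (r s : ℕ) (hr : 1 ≤ r) :
    ((∑ j : Fin (m + 1), C (x j.castSucc / x (Fin.last (m + 1)))
        * X ^ (k (Fin.last (m + 1)) - k j.castSucc)) ^ r).coeff s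
      = (r.factorial : ℂ) * PhiB m k ((r : ℤ), (r : ℤ) * (k (Fin.last (m + 1)) : ℤ) - (s : ℤ))
          (fun j => x j.castSucc) / x (Fin.last (m + 1)) ^ r := by
  set d := k (Fin.last (m + 1)) with hd
  set xd := x (Fin.last (m + 1)) with hxd'
  set c : Fin (m + 1) → ℂ := fun j => x j.castSucc / xd with hc
  set e : Fin (m + 1) → ℕ := fun j => d - k j.castSucc with he
  have hkle : ∀ j : Fin (m + 1), k j.castSucc ≤ d :=
    fun j => (hmono (Fin.castSucc_lt_last j)).le
  -- expand the power
  rw [Finset.sum_pow_eq_sum_piAntidiag, Polynomial.finset_sum_coeff]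
  have hterm : ∀ v ∈ Finset.piAntidiag Finset.univ r,
      ((Nat.multinomial Finset.univ v : ℂ[X]) * ∏ j, (C (c j) * X ^ (e j)) ^ (v j)).coeff s
        = if s = ∑ j, e j * v j then (Nat.multinomial Finset.univ v : ℂ) * ∏ j, c j ^ (v j)
          else 0 := by
    intro v _
    have hprod : (∏ j, (C (c j) * X ^ (e j)) ^ (v j))
        = C (∏ j, c j ^ (v j)) * X ^ (∑ j, e j * v j) := by
      rw [map_prod, ← Finset.prod_pow_eq_pow_sum, ← Finset.prod_mul_distrib]
      apply Finset.prod_congr rfl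
      intro j _
      rw [mul_pow, ← C_pow, ← pow_mul]
    rw [hprod, ← Polynomial.C_eq_natCast, Polynomial.coeff_C_mul, Polynomial.coeff_C_mul,
      Polynomial.coeff_X_pow]
    split <;> simp
  rw [Finset.sum_congr rfl hterm]
  -- unfold PhiB
  rw [PhiB, if_pos (by positivity : (0 : ℤ) ≤ ((r : ℤ), (r : ℤ) * (d : ℤ) - (s : ℤ)).1)]
  simp only [Int.toNat_natCast]
  -- rewrite both sides as sums over filters
  rw [← Finset.sum_filter]
  have hR : ∀ u : Fin (m + 1) → Fin (r + 1),
      (if (∑ j, ((u j : ℕ) : ℤ)) = (r : ℤ) ∧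
          (∑ j, (k j.castSucc : ℤ) * ((u j : ℕ) : ℤ)) = (r : ℤ) * (d : ℤ) - (s : ℤ) then
        (∏ j, (fun j => x j.castSucc) j ^ (u j : ℕ)) / (∏ j, ((u j : ℕ).factorial : ℂ))
      else 0)
      = (if (∑ j, ((u j : ℕ) : ℤ)) = (r : ℤ) ∧
          (∑ j, (k j.castSucc : ℤ) * ((u j : ℕ) : ℤ)) = (r : ℤ) * (d : ℤ) - (s : ℤ) then
        (∏ j, x j.castSucc ^ (u j : ℕ)) / (∏ j, ((u j : ℕ).factorial : ℂ))
      else 0) := fun u => rfl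
  rw [Finset.sum_congr rfl fun u _ => hR u, ← Finset.sum_filter]
  rw [Finset.mul_sum, Finset.sum_div]
  -- arithmetic equivalence of the two conditions
  have harith : ∀ v : Fin (m + 1) → ℕ, (∑ j, v j = r) →
      ((s = ∑ j, e j * v j) ↔
        (∑ j, (k j.castSucc : ℤ) * ((v j : ℕ) : ℤ)) = (r : ℤ) * (d : ℤ) - (s : ℤ)) := by
    intro v hv
    have hsum : (∑ j, e j * v j) + (∑ j, k j.castSucc * v j) = d * r := by
      rw [← Finset.sum_add_distrib, ← hv, Finset.mul_sum]
      apply Finset.sum_congr rfl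
      intro j _
      have := hkle j
      rw [← add_mul]
      congr 1
      simp only [he]
      omega
    have hcast : (∑ j, (k j.castSucc : ℤ) * ((v j : ℕ) : ℤ))
        = ((∑ j, k j.castSucc * v j : ℕ) : ℤ) := by push_cast; rfl
    have hD : (r : ℤ) * (d : ℤ) = ((d * r : ℕ) : ℤ) := by push_cast; ring
    rw [hcast, hD]
    generalize hB : (∑ j, k j.castSucc * v j) = B at hsum ⊢
    generalize hA : (∑ j, e j * v j) = A at hsum ⊢
    generalize hDD : d * r = D at hsum ⊢
    omega
  -- the bijection between the two filtered index sets
  refine Finset.sum_bij'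
    (fun v hv j => (⟨v j, by
      have h1 : ∑ j, v j = r :=
        (Finset.mem_piAntidiag.mp (Finset.mem_filter.mp hv).1).1
      have h2 : v j ≤ ∑ j, v j :=
        Finset.single_le_sum (f := v) (fun i _ => Nat.zero_le _) (Finset.mem_univ j)
      omega⟩ : Fin (r + 1)))
    (fun u _ j => (u j : ℕ)) ?_ ?_ ?_ ?_ ?_
  · intro v hv
    obtain ⟨hv1, hv2⟩ := Finset.mem_filter.mp hv
    have h1 : ∑ j, v j = r := (Finset.mem_piAntidiag.mp hv1).1
    refine Finset.mem_filter.mpr ⟨Finset.mem_univ _, ?_, ?_⟩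
    · exact_mod_cast h1
    · exact (harith v h1).mp hv2
  · intro u hu
    obtain ⟨-, hu1, hu2⟩ := Finset.mem_filter.mp hu
    have h1 : ∑ j, (u j : ℕ) = r := by exact_mod_cast hu1
    refine Finset.mem_filter.mpr ⟨Finset.mem_piAntidiag.mpr ⟨h1, fun i _ => Finset.mem_univ i⟩, ?_⟩
    exact (harith _ h1).mpr hu2
  · intro v hv
    rfl
  · intro u hu
    funext j
    exact Fin.ext rfl
  · intro v hv
    obtain ⟨hv1, hv2⟩ := Finset.mem_filter.mp hv
    have h1 : ∑ j, v j = r := (Finset.mem_piAntidiag.mp hv1).1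
    -- value equality
    have hfact : (∏ j, ((v j).factorial : ℂ)) ≠ 0 := by
      apply Finset.prod_ne_zero_iff.mpr
      intro j _
      exact_mod_cast Nat.factorial_ne_zero (v j)
    have hmult : (Nat.multinomial Finset.univ v : ℂ) * ∏ j, ((v j).factorial : ℂ)
        = (r.factorial : ℂ) := by
      rw [← Nat.cast_prod, ← Nat.cast_mul, mul_comm]
      rw [Nat.multinomial_spec]
      rw [h1]
    have hprodc : ∏ j, c j ^ (v j) = (∏ j, x j.castSucc ^ (v j)) / xd ^ r := by
      simp only [hc, div_pow]
      rw [Finset.prod_div_distrib, Finset.prod_pow_eq_pow_sum, h1]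
    rw [hprodc]
    have hxdr : xd ^ r ≠ 0 := pow_ne_zero r hxd
    simp only [Fin.val_mk]
    field_simp
    linear_combination (∏ j, x j.castSucc ^ (v j)) * hmult

/-- Girard's formula as a hypergeometric identity,
Corollary 1.12: if `ρ_1,…,ρ_d` are the (holomorphic) roots of the generic
polynomial `f(x;t) = x_0 + x_{k_1}t^{k_1} + ⋯ + x_d t^d` on an open set `U`
avoiding the discriminant locus and `{x_0 x_d = 0}`, then for every `s > 0`,
`p_s(x) = ∑_i ρ_i(x)^s = s ∑_{r=1}^s (−1)^r (r−1)! Φ^B((r, rd−s); x')/x_d^r`. -/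
theorem power_sums_hypergeometric
    (m : ℕ) (k : Fin (m + 2) → ℕ) (hmono : StrictMono k) (h0 : k 0 = 0)
    (U : Set (Fin (m + 2) → ℂ)) (hU : IsOpen U)
    (ρ : Fin (k (Fin.last (m + 1))) → (Fin (m + 2) → ℂ) → ℂ)
    (hρdiff : ∀ i, DifferentiableOn ℂ (ρ i) U)
    (hfac : ∀ x ∈ U, ∀ t : ℂ,
      (∑ j, x j * t ^ (k j)) = x (Fin.last (m + 1)) * ∏ i, (t - ρ i x))
    (hdisc : ∀ x ∈ U, Function.Injective fun i => ρ i x)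
    (hx0 : ∀ x ∈ U, x 0 ≠ 0)
    (hxd : ∀ x ∈ U, x (Fin.last (m + 1)) ≠ 0)
    (s : ℕ) (hs : 0 < s) :
    ∀ x ∈ U,
      (∑ i, ρ i x ^ s) =
        (s : ℂ) * ∑ r ∈ Finset.Icc 1 s,
          (-1) ^ r * ((r - 1).factorial : ℂ) *
            PhiB m k ((r : ℤ), (r : ℤ) * (k (Fin.last (m + 1)) : ℤ) - s)
              (fun j => x j.castSucc) / x (Fin.last (m + 1)) ^ r := by
  intro x hx
  have hxd0 : x (Fin.last (m + 1)) ≠ 0 := hxd x hx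
  have hkle : ∀ j : Fin (m + 2), k j ≤ k (Fin.last (m + 1)) :=
    fun j => hmono.monotone (Fin.le_last j)
  -- Step 1: the reversed polynomial identity
  have hP : C (x (Fin.last (m + 1))) * ∏ i, (1 - C (ρ i x) * X)
      = ∑ j : Fin (m + 2), C (x j) * X ^ (k (Fin.last (m + 1)) - k j) := by
    apply Polynomial.eq_of_infinite_eval_eq
    have hinf : ({(0:ℂ)}ᶜ : Set ℂ).Infinite := (Set.finite_singleton 0).infinite_compl
    apply hinf.mono
    intro z hz
    have hz0 : z ≠ 0 := hz
    simp only [Set.mem_setOf_eq, Polynomial.eval_mul, Polynomial.eval_C, Polynomial.eval_prod,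
      Polynomial.eval_sub, Polynomial.eval_one, Polynomial.eval_pow, Polynomial.eval_X,
      Polynomial.eval_finset_sum]
    have hfz := hfac x hx z⁻¹
    have key1 : ∏ i, ((1:ℂ) - ρ i x * z)
        = (∏ i, (z⁻¹ - ρ i x)) * z ^ (k (Fin.last (m + 1))) := by
      rw [show (z:ℂ) ^ (k (Fin.last (m + 1))) = ∏ _i : Fin (k (Fin.last (m + 1))), z by
        rw [Finset.prod_const, Finset.card_univ, Fintype.card_fin]]
      rw [← Finset.prod_mul_distrib]
      apply Finset.prod_congr rfl
      intro i _
      field_simp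
    have hzk : ∀ j : Fin (m + 2), x j * (z⁻¹) ^ (k j) * z ^ (k (Fin.last (m + 1)))
        = x j * z ^ (k (Fin.last (m + 1)) - k j) := by
      intro j
      have hzd : (z:ℂ) ^ (k (Fin.last (m + 1)))
          = z ^ (k j) * z ^ (k (Fin.last (m + 1)) - k j) := by
        rw [← pow_add]
        congr 1
        have := hkle j
        omega
      rw [hzd, ← mul_assoc, mul_assoc (x j), inv_pow, inv_mul_cancel₀ (pow_ne_zero _ hz0),
        mul_one]
    calc x (Fin.last (m + 1)) * ∏ i, ((1:ℂ) - ρ i x * z)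
        = (x (Fin.last (m + 1)) * ∏ i, (z⁻¹ - ρ i x)) * z ^ (k (Fin.last (m + 1))) := by
          rw [key1]; ring
      _ = (∑ j, x j * (z⁻¹) ^ (k j)) * z ^ (k (Fin.last (m + 1))) := by rw [← hfz]
      _ = ∑ j, x j * z ^ (k (Fin.last (m + 1)) - k j) := by
          rw [Finset.sum_mul]
          exact Finset.sum_congr rfl fun j _ => hzk j
  -- Step 2: the shifted product in coefficient form
  have hh : (∏ i, (1 - C (ρ i x) * X)) - 1
      = ∑ j : Fin (m + 1), C (x j.castSucc / x (Fin.last (m + 1)))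
          * X ^ (k (Fin.last (m + 1)) - k j.castSucc) := by
    have h2 : ∏ i, (1 - C (ρ i x) * X)
        = C (x (Fin.last (m + 1)))⁻¹ * (C (x (Fin.last (m + 1))) * ∏ i, (1 - C (ρ i x) * X)) := by
      rw [← mul_assoc, ← map_mul, inv_mul_cancel₀ hxd0, map_one, one_mul]
    rw [h2, hP, Finset.mul_sum, Fin.sum_univ_castSucc]
    have hlast : C (x (Fin.last (m + 1)))⁻¹
        * (C (x (Fin.last (m + 1))) * X ^ (k (Fin.last (m + 1)) - k (Fin.last (m + 1))))
        = (1 : ℂ[X]) := by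
      rw [Nat.sub_self, pow_zero, mul_one, ← map_mul, inv_mul_cancel₀ hxd0, map_one]
    rw [hlast, add_sub_cancel_right]
    apply Finset.sum_congr rfl
    intro j _
    rw [← mul_assoc, ← map_mul]
    congr 2
    field_simp
  -- Step 3: combine
  have hcoeff := Gpoly_prod (Finset.univ : Finset (Fin (k (Fin.last (m + 1)))))
    (fun i => ρ i x) s hs
  rw [Gpoly_coeff_eq _ hs] at hcoeff
  beta_reduce at hcoeff
  have hmain : (∑ i, ρ i x ^ s)
      = ∑ r ∈ Finset.Icc 1 s,
          -((-1 : ℂ) ^ (r - 1) * ((s : ℂ) / r)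
            * (((((∏ i, (1 - C (ρ i x) * X)) - 1) ^ r)).coeff s)) := by
    rw [Finset.sum_neg_distrib]
    linear_combination hcoeff
  rw [hmain, Finset.mul_sum]
  apply Finset.sum_congr rfl
  intro r hr
  obtain ⟨hr1, hr2⟩ := Finset.mem_Icc.mp hr
  rw [hh, coeff_pow_eq_phiB m k hmono x hxd0 r s hr1]
  have hrne : (r : ℂ) ≠ 0 := Nat.cast_ne_zero.mpr (by omega)
  have hfacr : (r.factorial : ℂ) = (r : ℂ) * ((r - 1).factorial : ℂ) := by
    rw [← Nat.cast_mul, Nat.mul_factorial_pred (by omega)]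
  have hneg : ((-1 : ℂ)) ^ (r - 1) = -(-1 : ℂ) ^ r := by
    rw [show r = (r - 1) + 1 by omega, pow_succ]
    rw [show r - 1 + 1 - 1 = r - 1 by omega]
    ring
  rw [hfacr, hneg]
  have hxdr : x (Fin.last (m + 1)) ^ r ≠ 0 := pow_ne_zero r hxd0
  field_simp
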